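/- arXiv:2507.10388 — 5 statements merged into one kernel-verified Lean document; each statement's English description precedes it below -/
import Mathlib

section
/- Let (𝒳, 𝒜, μ) be a probability space, w₀ ∈ (0, 1], and f₀, f₁ : 𝒳 → ℝ measurable functions with 0 ≤ f₀(x), 0 < f₁(x), and f₀(x) + f₁(x) ≤ 1 for μ-almost every x, such that (1 − f₀)²/f₁ is μ-integrable. Then ∫ [(1 − w₀)(1 − f₀(x)) + w₀ f₁(x)] · (1 − f₀(x))/f₁(x) dμ(x) ≥ ∫ (1 − f₀(x)) dμ(x). If in addition μ({x : f₀(x) + f₁(x) < 1}) > 0, then equality holds if and only if w₀ = 1. -/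
open MeasureTheory

/-- Theorem 4(b): the expected score for the one-inflation parameter in the
one-inflated zero-truncated model is nonpositive, with equality iff `w₀ = 1`,
provided `μ {f₀ + f₁ < 1} > 0`. -/
theorem expected_score_one_inflated_zero_truncated
    {𝒳 : Type*} [MeasurableSpace 𝒳] (μ : Measure 𝒳) [IsProbabilityMeasure μ]
    (w₀ : ℝ) (hw₀ : w₀ ∈ Set.Ioc (0 : ℝ) 1)
    (f₀ f₁ : 𝒳 → ℝ) (hf₀ : Measurable f₀) (hf₁ : Measurable f₁)
    (hae : ∀ᵐ x ∂μ, 0 ≤ f₀ x ∧ 0 < f₁ x ∧ f₀ x + f₁ x ≤ 1)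
    (hint : Integrable (fun x => (1 - f₀ x) ^ 2 / f₁ x) μ) :
    (∫ x, (1 - f₀ x) ∂μ) ≤
        ∫ x, ((1 - w₀) * (1 - f₀ x) + w₀ * f₁ x) * (1 - f₀ x) / f₁ x ∂μ ∧
      (0 < μ {x | f₀ x + f₁ x < 1} →
        ((∫ x, ((1 - w₀) * (1 - f₀ x) + w₀ * f₁ x) * (1 - f₀ x) / f₁ x ∂μ) =
            ∫ x, (1 - f₀ x) ∂μ ↔ w₀ = 1)) := by
  obtain ⟨hw1, hw2⟩ := hw₀
  set k : 𝒳 → ℝ := fun x => 1 - f₀ x with hk_def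
  set h : 𝒳 → ℝ := fun x => (1 - f₀ x) ^ 2 / f₁ x with hh_def
  have hkint : Integrable k μ := by
    refine (integrable_const (1 : ℝ)).mono'
      ((measurable_const.sub hf₀).aestronglyMeasurable) ?_
    filter_upwards [hae] with x hx
    rw [Real.norm_eq_abs, abs_le]
    constructor <;> simp only [hk_def] <;> nlinarith [hx.1, hx.2.1.le, hx.2.2]
  -- a.e. rewriting of the integrand
  have haeq : (fun x => ((1 - w₀) * (1 - f₀ x) + w₀ * f₁ x) * (1 - f₀ x) / f₁ x)
      =ᵐ[μ] fun x => (1 - w₀) * h x + w₀ * k x := by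
    filter_upwards [hae] with x hx
    have h1 : f₁ x ≠ 0 := ne_of_gt hx.2.1
    simp only [hh_def, hk_def]
    field_simp
  have hInt2 : Integrable (fun x => (1 - w₀) * h x + w₀ * k x) μ :=
    (hint.const_mul _).add (hkint.const_mul _)
  have hIg : (∫ x, ((1 - w₀) * (1 - f₀ x) + w₀ * f₁ x) * (1 - f₀ x) / f₁ x ∂μ)
      = (1 - w₀) * (∫ x, h x ∂μ) + w₀ * (∫ x, k x ∂μ) := by
    rw [integral_congr_ae haeq, integral_add (hint.const_mul _) (hkint.const_mul _),
      integral_const_mul, integral_const_mul]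
  -- h ≥ k a.e.
  have hhk : ∀ᵐ x ∂μ, k x ≤ h x := by
    filter_upwards [hae] with x hx
    simp only [hh_def, hk_def]
    rw [le_div_iff₀ hx.2.1]
    nlinarith [hx.1, hx.2.1, hx.2.2]
  have hIhk : (∫ x, k x ∂μ) ≤ ∫ x, h x ∂μ := integral_mono_ae hkint hint hhk
  have hmain : (∫ x, (1 - f₀ x) ∂μ) ≤
      ∫ x, ((1 - w₀) * (1 - f₀ x) + w₀ * f₁ x) * (1 - f₀ x) / f₁ x ∂μ := by
    rw [hIg]
    have : (0:ℝ) ≤ 1 - w₀ := by linarith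
    nlinarith [hIhk]
  refine ⟨hmain, fun hpos => ?_⟩
  -- strict inequality between the integrals of h and k
  have hdint : Integrable (fun x => h x - k x) μ := hint.sub hkint
  have hdpos : 0 < ∫ x, (h x - k x) ∂μ := by
    rw [integral_pos_iff_support_of_nonneg_ae ?_ hdint]
    · refine lt_of_lt_of_le hpos (measure_mono_ae ?_)
      filter_upwards [hae] with x hx hxs
      have hx1 : f₁ x < 1 - f₀ x := by
        have : f₀ x + f₁ x < 1 := hxs
        linarith
      have : k x < h x := by
        simp only [hh_def, hk_def]
        rw [lt_div_iff₀ hx.2.1]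
        nlinarith [hx.2.1]
      have hne : h x - k x ≠ 0 := by
        have := sub_pos.mpr this
        exact ne_of_gt this
      exact hne
    · filter_upwards [hhk] with x hx
      simpa using sub_nonneg.mpr hx
  have hdd : (∫ x, (h x - k x) ∂μ) = (∫ x, h x ∂μ) - ∫ x, k x ∂μ :=
    integral_sub hint hkint
  rw [hdd] at hdpos
  constructor
  · intro heq
    rw [hIg] at heq
    have hIk : (∫ x, (1 - f₀ x) ∂μ) = ∫ x, k x ∂μ := rfl
    rw [hIk] at heq
    nlinarith [hdpos]
  · intro hw
    rw [hIg, hw]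
    simp [hk_def]
end

section
/- Fix an integer N ≥ n, β ∈ B, w ∈ (0, 1), and weights p = (p₁, …, pₙ) with each p_i > 0 and Σ_i p_i = 1. Assume that f(y_i, x_i; β′) > 0, f(0, x_i; β′) > 0 and f(1, x_i; β′) > 0 for all i = 1, …, n and all β′ ∈ B. Set α = w Σ_i f(0, x_i; β) p_i, v_i = w f(1, x_i; β)/(1 − w + w f(1, x_i; β)) if y_i = 1 and v_i = 1 otherwise, and u_i = (N − n) w f(0, x_i; β) p_i / α. Define the EM updates w⁺ = Σ_i (v_i + u_i) / Σ_i (1 + u_i), p_i⁺ = (u_i + 1)/Σ_j (u_j + 1), and let β⁺ ∈ B be any maximizer over B of ℓ₂(β′) = Σ_i [v_i log f(y_i, x_i; β′) + u_i log f(0, x_i; β′)]. Then L_N(β⁺, w⁺, p⁺) ≥ L_N(β, w, p); that is, one EM iteration with N held fixed does not decrease the log empirical likelihood. -/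
open scoped BigOperators


lemma gibbs {ι : Type*} (s : Finset ι) (a b : ι → ℝ)
    (ha : ∀ i ∈ s, 0 < a i) (hb : ∀ i ∈ s, 0 < b i)
    (hab : ∑ i ∈ s, b i ≤ ∑ i ∈ s, a i) :
    ∑ i ∈ s, a i * (Real.log (b i) - Real.log (a i)) ≤ 0 := by
  have h1 : ∑ i ∈ s, a i * (Real.log (b i) - Real.log (a i)) ≤ ∑ i ∈ s, (b i - a i) := by
    refine Finset.sum_le_sum fun i hi => ?_
    have hai := ha i hi
    have hbi := hb i hi
    have hlog : Real.log (b i) - Real.log (a i) ≤ b i / a i - 1 := by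
      have := Real.log_le_sub_one_of_pos (div_pos hbi hai)
      rwa [Real.log_div hbi.ne' hai.ne'] at this
    have h2 := mul_le_mul_of_nonneg_left hlog hai.le
    have heq : a i * (b i / a i - 1) = b i - a i := by field_simp
    linarith
  have h2 : ∑ i ∈ s, (b i - a i) ≤ 0 := by
    rw [Finset.sum_sub_distrib]; linarith
  linarith

lemma gibbs2 (a₁ a₂ b₁ b₂ : ℝ) (ha₁ : 0 < a₁) (ha₂ : 0 < a₂)
    (hb₁ : 0 < b₁) (hb₂ : 0 < b₂) (hab : b₁ + b₂ ≤ a₁ + a₂) :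
    a₁ * (Real.log b₁ - Real.log a₁) + a₂ * (Real.log b₂ - Real.log a₂) ≤ 0 := by
  have h1 : Real.log b₁ - Real.log a₁ ≤ b₁ / a₁ - 1 := by
    have := Real.log_le_sub_one_of_pos (div_pos hb₁ ha₁)
    rwa [Real.log_div hb₁.ne' ha₁.ne'] at this
  have h2 : Real.log b₂ - Real.log a₂ ≤ b₂ / a₂ - 1 := by
    have := Real.log_le_sub_one_of_pos (div_pos hb₂ ha₂)
    rwa [Real.log_div hb₂.ne' ha₂.ne'] at this
  have e1 : a₁ * (b₁ / a₁ - 1) = b₁ - a₁ := by field_simp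
  have e2 : a₂ * (b₂ / a₂ - 1) = b₂ - a₂ := by field_simp
  nlinarith [mul_le_mul_of_nonneg_left h1 ha₁.le, mul_le_mul_of_nonneg_left h2 ha₂.le]

/-- Theorem 1(a): one EM iteration with the population size `N` held fixed does not
decrease the log empirical likelihood
`L_N(β, w, p) = log C(N, n) + (N − n) log α(β, w, p)
  + Σᵢ log h(yᵢ, xᵢ; β, w) + Σᵢ log pᵢ`,
where `h(y, x; β, w) = w f(y, x; β) + (1 − w)·1{y = 1}` and
`α(β, w, p) = w Σᵢ f(0, xᵢ; β) pᵢ`. -/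
theorem em_step_monotone_fixed_N
    {𝒳 B : Type*} (n : ℕ) (x : Fin n → 𝒳) (y : Fin n → ℕ) (hy : ∀ i, 1 ≤ y i)
    (f : ℕ → 𝒳 → B → ℝ)
    (hf_nonneg : ∀ (k : ℕ) (ξ : 𝒳) (b : B), 0 ≤ f k ξ b)
    (hf_pmf : ∀ (ξ : 𝒳) (b : B), ∑' k : ℕ, f k ξ b = 1)
    (N : ℕ) (hN : n ≤ N)
    (β : B) (w : ℝ) (hw : w ∈ Set.Ioo (0 : ℝ) 1)
    (p : Fin n → ℝ) (hp : ∀ i, 0 < p i) (hp1 : ∑ i, p i = 1)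
    (hfy : ∀ (i : Fin n) (b : B), 0 < f (y i) (x i) b)
    (hf0 : ∀ (i : Fin n) (b : B), 0 < f 0 (x i) b)
    (hf1 : ∀ (i : Fin n) (b : B), 0 < f 1 (x i) b)
    (α : ℝ) (hα : α = w * ∑ i, f 0 (x i) β * p i)
    (v : Fin n → ℝ)
    (hv : ∀ i, v i =
      if y i = 1 then w * f 1 (x i) β / (1 - w + w * f 1 (x i) β) else 1)
    (u : Fin n → ℝ)
    (hu : ∀ i, u i = ((N : ℝ) - n) * w * f 0 (x i) β * p i / α)
    (w' : ℝ) (hw' : w' = (∑ i, (v i + u i)) / (∑ i, (1 + u i)))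
    (p' : Fin n → ℝ) (hp' : ∀ i, p' i = (u i + 1) / ∑ j, (u j + 1))
    (β' : B)
    (hβ' : ∀ b : B,
      (∑ i, (v i * Real.log (f (y i) (x i) b) + u i * Real.log (f 0 (x i) b))) ≤
        ∑ i, (v i * Real.log (f (y i) (x i) β') + u i * Real.log (f 0 (x i) β'))) :
    Real.log (N.choose n : ℝ) + ((N : ℝ) - n) * Real.log α +
        (∑ i, Real.log (w * f (y i) (x i) β + (1 - w) * (if y i = 1 then 1 else 0))) +
        (∑ i, Real.log (p i)) ≤
      Real.log (N.choose n : ℝ) +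
        ((N : ℝ) - n) * Real.log (w' * ∑ i, f 0 (x i) β' * p' i) +
        (∑ i, Real.log (w' * f (y i) (x i) β' + (1 - w') * (if y i = 1 then 1 else 0))) +
        (∑ i, Real.log (p' i)) := by
  obtain ⟨hw0, hw1⟩ := hw
  have hn : 0 < n := by
    rcases Nat.eq_zero_or_pos n with h | h
    · subst h; simp at hp1
    · exact h
  haveI : Nonempty (Fin n) := ⟨⟨0, hn⟩⟩
  set K : ℝ := (N : ℝ) - (n : ℝ) with hKdef
  clear_value K
  have hK0 : 0 ≤ K := by
    rw [hKdef]; simp only [sub_nonneg]; exact_mod_cast hN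
  have hn1 : (1 : ℝ) ≤ (n : ℝ) := by exact_mod_cast hn
  have hα0 : 0 < α := by
    rw [hα]
    exact mul_pos hw0
      (Finset.sum_pos (fun i _ => mul_pos (hf0 i β) (hp i)) Finset.univ_nonempty)
  have hu0 : ∀ i, 0 ≤ u i := fun i => by
    rw [hu i]
    exact div_nonneg
      (mul_nonneg (mul_nonneg (mul_nonneg hK0 hw0.le) (hf0 i β).le) (hp i).le) hα0.le
  have hv01 : ∀ i, 0 < v i ∧ v i ≤ 1 := fun i => by
    rw [hv i]
    split_ifs with h
    · have hF := hf1 i β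
      have hd : 0 < 1 - w + w * f 1 (x i) β := by nlinarith
      refine ⟨div_pos (mul_pos hw0 hF) hd, ?_⟩
      rw [div_le_one hd]; nlinarith
    · exact ⟨one_pos, le_rfl⟩
  have hUK : ∑ i, u i = K := by
    have h1 : ∀ i ∈ Finset.univ, u i = K * w / α * (f 0 (x i) β * p i) :=
      fun i _ => by rw [hu i]; ring
    rw [Finset.sum_congr rfl h1, ← Finset.mul_sum, div_mul_eq_mul_div, mul_assoc, ← hα,
      mul_div_assoc, div_self hα0.ne', mul_one]
  have hVpos : 0 < ∑ i, v i :=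
    Finset.sum_pos (fun i _ => (hv01 i).1) Finset.univ_nonempty
  have hVn : ∑ i, v i ≤ (n : ℝ) := by
    calc ∑ i, v i ≤ ∑ _i : Fin n, (1 : ℝ) := Finset.sum_le_sum fun i _ => (hv01 i).2
    _ = n := by simp
  have hnK : 0 < (n : ℝ) + K := by linarith
  have hAeq : ∑ i, (v i + u i) = (∑ i, v i) + K := by
    rw [Finset.sum_add_distrib, hUK]
  have hTeq : ∑ i, ((1 : ℝ) + u i) = (n : ℝ) + K := by
    have hone : ∑ _i : Fin n, (1 : ℝ) = n := by simp
    rw [Finset.sum_add_distrib, hUK, hone]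
  have hw'' : w' = ((∑ i, v i) + K) / ((n : ℝ) + K) := by
    rw [hw', hAeq, hTeq]
  have hw'pos : 0 < w' := by rw [hw'']; exact div_pos (by linarith) hnK
  have hw'le1 : w' ≤ 1 := by rw [hw'', div_le_one hnK]; linarith
  have hTeq2 : ∑ j, (u j + 1) = (n : ℝ) + K := by
    have hone : ∑ _i : Fin n, (1 : ℝ) = n := by simp
    rw [Finset.sum_add_distrib, hUK, hone, add_comm]
  have hp'pos : ∀ i, 0 < p' i := fun i => by
    rw [hp' i, hTeq2]
    exact div_pos (by linarith [hu0 i]) hnK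
  have hlogp' : ∀ i, Real.log (p' i) = Real.log (u i + 1) - Real.log ((n : ℝ) + K) := by
    intro i
    have h1 : (0 : ℝ) < u i + 1 := by linarith [hu0 i]
    rw [hp' i, hTeq2, Real.log_div h1.ne' hnK.ne']
  set α' := w' * ∑ i, f 0 (x i) β' * p' i with hα'def
  clear_value α'
  have hα'0 : 0 < α' := by
    rw [hα'def]
    exact mul_pos hw'pos
      (Finset.sum_pos (fun i _ => mul_pos (hf0 i β') (hp'pos i)) Finset.univ_nonempty)
  -- (IIIβ)
  have hIIIβ : (∑ i, v i * Real.log (f (y i) (x i) β)) + (∑ i, u i * Real.log (f 0 (x i) β)) ≤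
      (∑ i, v i * Real.log (f (y i) (x i) β')) + (∑ i, u i * Real.log (f 0 (x i) β')) := by
    have h := hβ' β
    rwa [Finset.sum_add_distrib, Finset.sum_add_distrib] at h
  -- (IIIp)
  have hIIIp : (∑ i, u i * Real.log (p i)) + (∑ i, Real.log (p i)) ≤
      (∑ i, u i * Real.log (p' i)) + (∑ i, Real.log (p' i)) := by
    have hg := gibbs Finset.univ (fun i => u i + 1) (fun i => ((n : ℝ) + K) * p i)
      (fun i _ => by show (0:ℝ) < u i + 1; linarith [hu0 i])
      (fun i _ => mul_pos hnK (hp i))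
      (by
        show ∑ i, ((n : ℝ) + K) * p i ≤ ∑ i, (u i + 1)
        rw [← Finset.mul_sum, hp1, mul_one, hTeq2])
    have hg' : ∑ i, (u i + 1) * (Real.log (((n : ℝ) + K) * p i) - Real.log (u i + 1)) ≤ 0 := hg
    have heq : (∑ i, u i * Real.log (p i)) + (∑ i, Real.log (p i)) -
        ((∑ i, u i * Real.log (p' i)) + (∑ i, Real.log (p' i))) =
        ∑ i, (u i + 1) * (Real.log (((n : ℝ) + K) * p i) - Real.log (u i + 1)) := by
      rw [← Finset.sum_add_distrib, ← Finset.sum_add_distrib, ← Finset.sum_sub_distrib]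
      refine Finset.sum_congr rfl fun i _ => ?_
      rw [hlogp' i, Real.log_mul hnK.ne' (hp i).ne']
      ring
    linarith
  -- (IIIw)
  have hCeq : ∑ i, ((1 : ℝ) - v i) = (n : ℝ) - ∑ i, v i := by
    have hone : ∑ _i : Fin n, (1 : ℝ) = n := by simp
    rw [Finset.sum_sub_distrib, hone]
  have hIIIw : ((∑ i, v i) + K) * Real.log w + (∑ i, ((1 : ℝ) - v i)) * Real.log (1 - w) ≤
      ((∑ i, v i) + K) * Real.log w' + (∑ i, ((1 : ℝ) - v i)) * Real.log (1 - w') := by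
    rcases eq_or_lt_of_le (show (0 : ℝ) ≤ ∑ i, ((1 : ℝ) - v i) by rw [hCeq]; linarith)
      with hC | hC
    · have hVn' : ∑ i, v i = (n : ℝ) := by rw [hCeq] at hC; linarith
      have hw'1 : w' = 1 := by rw [hw'', hVn', div_self hnK.ne']
      rw [hw'1, ← hC]
      simp only [Real.log_one, zero_mul, mul_zero, add_zero, sub_self, Real.log_zero]
      exact mul_nonpos_of_nonneg_of_nonpos (by linarith)
        (Real.log_nonpos (by linarith) hw1.le)
    · have hVlt : ∑ i, v i < (n : ℝ) := by rw [hCeq] at hC; linarith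
      have hw'lt1 : w' < 1 := by rw [hw'', div_lt_one hnK]; linarith
      have h1w' : 0 < 1 - w' := by linarith
      have h1w : 0 < 1 - w := by linarith
      have g1 : Real.log w - Real.log w' ≤ w / w' - 1 := by
        have := Real.log_le_sub_one_of_pos (div_pos hw0 hw'pos)
        rwa [Real.log_div hw0.ne' hw'pos.ne'] at this
      have g2 : Real.log (1 - w) - Real.log (1 - w') ≤ (1 - w) / (1 - w') - 1 := by
        have := Real.log_le_sub_one_of_pos (div_pos h1w h1w')
        rwa [Real.log_div h1w.ne' h1w'.ne'] at this
      have e1 : ((∑ i, v i) + K) = ((n : ℝ) + K) * w' := by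
        rw [hw'']; field_simp
      have e2 : (∑ i, ((1 : ℝ) - v i)) = ((n : ℝ) + K) * (1 - w') := by
        rw [hCeq, hw'', mul_sub, mul_one, mul_div_cancel₀ _ hnK.ne']
        ring
      have m1 := mul_le_mul_of_nonneg_left g1 (show (0 : ℝ) ≤ (∑ i, v i) + K by linarith)
      have m2 := mul_le_mul_of_nonneg_left g2
        (show (0 : ℝ) ≤ ∑ i, ((1 : ℝ) - v i) by rw [hCeq]; linarith)
      have e3 : ((∑ i, v i) + K) * (w / w' - 1) = ((n : ℝ) + K) * w - ((∑ i, v i) + K) := by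
        rw [e1]; field_simp [hw'pos.ne']
      have e4 : (∑ i, ((1 : ℝ) - v i)) * ((1 - w) / (1 - w') - 1) =
          ((n : ℝ) + K) * (1 - w) - (∑ i, ((1 : ℝ) - v i)) := by
        rw [e2]; field_simp [h1w'.ne']
      linarith [m1, m2, e3, e4, hCeq]
  -- positivity of products
  have hX : ∀ i, 0 < w * f 0 (x i) β * p i := fun i => mul_pos (mul_pos hw0 (hf0 i β)) (hp i)
  have hX' : ∀ i, 0 < w' * f 0 (x i) β' * p' i :=
    fun i => mul_pos (mul_pos hw'pos (hf0 i β')) (hp'pos i)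
  -- identities for log of products
  have idA : ∑ i, u i * Real.log (w * f 0 (x i) β * p i) =
      K * Real.log w + (∑ i, u i * Real.log (f 0 (x i) β)) + (∑ i, u i * Real.log (p i)) := by
    have h1 : ∀ i ∈ Finset.univ, u i * Real.log (w * f 0 (x i) β * p i) =
        u i * Real.log w + (u i * Real.log (f 0 (x i) β) + u i * Real.log (p i)) := fun i _ => by
      rw [Real.log_mul (mul_pos hw0 (hf0 i β)).ne' (hp i).ne',
        Real.log_mul hw0.ne' (hf0 i β).ne']
      ring
    rw [Finset.sum_congr rfl h1, Finset.sum_add_distrib, Finset.sum_add_distrib,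
      ← Finset.sum_mul, hUK]
    ring
  have idA' : ∑ i, u i * Real.log (w' * f 0 (x i) β' * p' i) =
      K * Real.log w' + (∑ i, u i * Real.log (f 0 (x i) β')) + (∑ i, u i * Real.log (p' i)) := by
    have h1 : ∀ i ∈ Finset.univ, u i * Real.log (w' * f 0 (x i) β' * p' i) =
        u i * Real.log w' + (u i * Real.log (f 0 (x i) β') + u i * Real.log (p' i)) :=
      fun i _ => by
      rw [Real.log_mul (mul_pos hw'pos (hf0 i β')).ne' (hp'pos i).ne',
        Real.log_mul hw'pos.ne' (hf0 i β').ne']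
      ring
    rw [Finset.sum_congr rfl h1, Finset.sum_add_distrib, Finset.sum_add_distrib,
      ← Finset.sum_mul, hUK]
    ring
  have hsum' : ∑ i, (w' * f 0 (x i) β' * p' i) = α' := by
    rw [hα'def, Finset.mul_sum]
    exact Finset.sum_congr rfl fun i _ => by ring
  -- (I)
  have hg'A : (∑ i, u i * Real.log (w' * f 0 (x i) β' * p' i)) - K * Real.log α' -
      (∑ i, u i * Real.log (w * f 0 (x i) β * p i)) + K * Real.log α ≤ 0 := by
    rcases eq_or_lt_of_le hK0 with hK1 | hK1
    · have hz : ∀ i, u i = 0 := fun i => by rw [hu i, ← hK1]; simp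
      simp only [hz, zero_mul, Finset.sum_const_zero, ← hK1]
      norm_num
    · have hgb := gibbs Finset.univ u (fun i => K * (w' * f 0 (x i) β' * p' i) / α')
        (fun i _ => by
          rw [hu i]
          exact div_pos (mul_pos (mul_pos (mul_pos hK1 hw0) (hf0 i β)) (hp i)) hα0)
        (fun i _ => div_pos (mul_pos hK1 (hX' i)) hα'0)
        (by
          show ∑ i, K * (w' * f 0 (x i) β' * p' i) / α' ≤ ∑ i, u i
          have hb : ∑ i, K * (w' * f 0 (x i) β' * p' i) / α' = K := by
            rw [← Finset.sum_div, ← Finset.mul_sum, hsum', mul_div_assoc,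
              div_self hα'0.ne', mul_one]
          rw [hb, hUK])
      have hgb' : ∑ i, (u i * Real.log (w' * f 0 (x i) β' * p' i) - u i * Real.log α' -
          u i * Real.log (w * f 0 (x i) β * p i) + u i * Real.log α) ≤ 0 := by
        refine le_trans (le_of_eq (Finset.sum_congr rfl fun i _ => ?_)) hgb
        have hui : u i = K * (w * f 0 (x i) β * p i) / α := by rw [hu i]; ring
        have hlogu : Real.log (u i) =
            Real.log K + Real.log (w * f 0 (x i) β * p i) - Real.log α := by
          rw [hui, Real.log_div (mul_pos hK1 (hX i)).ne' hα0.ne',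
            Real.log_mul hK1.ne' (hX i).ne']
        have hlogb : Real.log (K * (w' * f 0 (x i) β' * p' i) / α') =
            Real.log K + Real.log (w' * f 0 (x i) β' * p' i) - Real.log α' := by
          rw [Real.log_div (mul_pos hK1 (hX' i)).ne' hα'0.ne',
            Real.log_mul hK1.ne' (hX' i).ne']
        rw [hlogb, hlogu]
        ring
      have e1 : ∑ i, u i * Real.log α' = K * Real.log α' := by rw [← Finset.sum_mul, hUK]
      have e2 : ∑ i, u i * Real.log α = K * Real.log α := by rw [← Finset.sum_mul, hUK]
      rw [Finset.sum_add_distrib, Finset.sum_sub_distrib, Finset.sum_sub_distrib, e1, e2] at hgb'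
      linarith
  -- (II) per-observation inequality
  have hkey : ∀ i,
      Real.log (w * f (y i) (x i) β + (1 - w) * (if y i = 1 then 1 else 0)) +
        (v i * (Real.log w' + Real.log (f (y i) (x i) β') - Real.log w -
            Real.log (f (y i) (x i) β)) +
          (1 - v i) * (Real.log (1 - w') - Real.log (1 - w))) ≤
      Real.log (w' * f (y i) (x i) β' + (1 - w') * (if y i = 1 then 1 else 0)) := by
    intro i
    by_cases h : y i = 1
    · rw [if_pos h]
      simp only [mul_one]
      rw [h]
      have hF := hf1 i β
      have hF' := hf1 i β'
      have hvi : v i = w * f 1 (x i) β / (w * f 1 (x i) β + (1 - w)) := by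
        rw [hv i, if_pos h]
        congr 1
        ring
      have h1w : (0 : ℝ) < 1 - w := by linarith
      have hden : 0 < w * f 1 (x i) β + (1 - w) := by positivity
      have hvlt : v i < 1 := by
        rw [hvi, div_lt_one hden]; linarith
      have hCpos : 0 < ∑ j, ((1 : ℝ) - v j) := by
        have h2 : ∀ j ∈ Finset.univ, (0 : ℝ) ≤ 1 - v j := fun j _ => by
          linarith [(hv01 j).2]
        calc (0 : ℝ) < 1 - v i := by linarith
        _ ≤ ∑ j, ((1 : ℝ) - v j) := Finset.single_le_sum h2 (Finset.mem_univ i)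
      have hw'lt1 : w' < 1 := by
        rw [hw'', div_lt_one hnK]
        rw [hCeq] at hCpos
        linarith
      have h1w' : (0 : ℝ) < 1 - w' := by linarith
      have hden' : 0 < w' * f 1 (x i) β' + (1 - w') :=
        add_pos (mul_pos hw'pos hF') h1w'
      have hg := gibbs2 (w * f 1 (x i) β / (w * f 1 (x i) β + (1 - w)))
        ((1 - w) / (w * f 1 (x i) β + (1 - w)))
        (w' * f 1 (x i) β' / (w' * f 1 (x i) β' + (1 - w')))
        ((1 - w') / (w' * f 1 (x i) β' + (1 - w')))
        (div_pos (mul_pos hw0 hF) hden) (div_pos h1w hden)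
        (div_pos (mul_pos hw'pos hF') hden') (div_pos h1w' hden')
        (le_of_eq (by
          rw [← add_div, ← add_div, div_self hden.ne', div_self hden'.ne']))
      have e1 : Real.log (w * f 1 (x i) β / (w * f 1 (x i) β + (1 - w))) =
          Real.log w + Real.log (f 1 (x i) β) - Real.log (w * f 1 (x i) β + (1 - w)) := by
        rw [Real.log_div (mul_pos hw0 hF).ne' hden.ne', Real.log_mul hw0.ne' hF.ne']
      have e2 : Real.log ((1 - w) / (w * f 1 (x i) β + (1 - w))) =
          Real.log (1 - w) - Real.log (w * f 1 (x i) β + (1 - w)) :=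
        Real.log_div h1w.ne' hden.ne'
      have e3 : Real.log (w' * f 1 (x i) β' / (w' * f 1 (x i) β' + (1 - w'))) =
          Real.log w' + Real.log (f 1 (x i) β') -
            Real.log (w' * f 1 (x i) β' + (1 - w')) := by
        rw [Real.log_div (mul_pos hw'pos hF').ne' hden'.ne', Real.log_mul hw'pos.ne' hF'.ne']
      have e4 : Real.log ((1 - w') / (w' * f 1 (x i) β' + (1 - w'))) =
          Real.log (1 - w') - Real.log (w' * f 1 (x i) β' + (1 - w')) :=
        Real.log_div h1w'.ne' hden'.ne'
      rw [e1, e2, e3, e4, ← hvi] at hg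
      have hvi2 : (1 - w) / (w * f 1 (x i) β + (1 - w)) = 1 - v i := by
        rw [hvi]; field_simp; ring
      rw [hvi2] at hg
      linarith
    · simp only [if_neg h, mul_zero, add_zero]
      have hvi : v i = 1 := by rw [hv i, if_neg h]
      rw [hvi, Real.log_mul hw0.ne' (hfy i β).ne', Real.log_mul hw'pos.ne' (hfy i β').ne']
      ring_nf
      linarith
  have hsum_key := Finset.sum_le_sum fun i (_ : i ∈ Finset.univ) => hkey i
  have hsplit_h : ∑ i, (Real.log (w * f (y i) (x i) β + (1 - w) * (if y i = 1 then 1 else 0)) +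
      (v i * (Real.log w' + Real.log (f (y i) (x i) β') - Real.log w -
          Real.log (f (y i) (x i) β)) +
        (1 - v i) * (Real.log (1 - w') - Real.log (1 - w)))) =
      (∑ i, Real.log (w * f (y i) (x i) β + (1 - w) * (if y i = 1 then 1 else 0))) +
      ∑ i, (v i * (Real.log w' + Real.log (f (y i) (x i) β') - Real.log w -
          Real.log (f (y i) (x i) β)) +
        (1 - v i) * (Real.log (1 - w') - Real.log (1 - w))) := Finset.sum_add_distrib
  have hexp : ∑ i, (v i * (Real.log w' + Real.log (f (y i) (x i) β') - Real.log w -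
          Real.log (f (y i) (x i) β)) +
        (1 - v i) * (Real.log (1 - w') - Real.log (1 - w))) =
      (∑ i, v i * Real.log (f (y i) (x i) β')) - (∑ i, v i * Real.log (f (y i) (x i) β)) +
      (∑ i, v i) * Real.log w' - (∑ i, v i) * Real.log w +
      (∑ i, ((1 : ℝ) - v i)) * Real.log (1 - w') -
      (∑ i, ((1 : ℝ) - v i)) * Real.log (1 - w) := by
    simp only [Finset.sum_mul, mul_add, mul_sub, sub_mul, one_mul,
      Finset.sum_add_distrib, Finset.sum_sub_distrib]
    ring
  linarith [hg'A, idA, idA', hsum_key, hsplit_h, hexp, hIIIβ, hIIIw, hIIIp]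
end

section
/- Fix an integer N ≥ n, β ∈ B, w ∈ (0, 1), and weights p = (p₁, …, pₙ) with each p_i > 0 and Σ_i p_i = 1, and assume f(y_i, x_i; β′) > 0, f(0, x_i; β′) > 0 and f(1, x_i; β′) > 0 for all i and all β′ ∈ B. With v_i, u_i, w⁺, p⁺, β⁺ defined as in the EM iteration (v_i = w f(1, x_i; β)/(1 − w + w f(1, x_i; β)) if y_i = 1 and v_i = 1 otherwise; u_i = (N − n) w f(0, x_i; β) p_i / α with α = w Σ_i f(0, x_i; β) p_i; w⁺ = Σ_i (v_i + u_i)/Σ_i (1 + u_i); p_i⁺ = (u_i + 1)/Σ_j (u_j + 1); β⁺ any maximizer of ℓ₂(β′) = Σ_i [v_i log f(y_i, x_i; β′) + u_i log f(0, x_i; β′)]), let α⁺ = w⁺ Σ_i f(0, x_i; β⁺) p_i⁺ and let N⁺ be any maximizer over integers N′ ≥ n of log C(N′, n) + (N′ − n) log α⁺. Then L_{N⁺}(β⁺, w⁺, p⁺) ≥ L_N(β, w, p); that is, one EM iteration with N updated does not decrease the log empirical likelihood. -/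
open scoped BigOperators


/-- Jensen's inequality for `Real.log`: relative-entropy form. -/
lemma jensen_log_sum {n : ℕ} (q s : Fin n → ℝ) (hq : ∀ i, 0 < q i)
    (hs : ∀ i, 0 < s i) (hq1 : ∑ i, q i = 1) :
    ∑ i, q i * (Real.log (s i) - Real.log (q i)) ≤ Real.log (∑ i, s i) := by
  have hn : n ≠ 0 := by rintro rfl; simp at hq1
  have hne : (Finset.univ : Finset (Fin n)).Nonempty := by
    rw [Finset.univ_nonempty_iff]
    exact Fin.pos_iff_nonempty.mp (Nat.pos_of_ne_zero hn)
  have hS : 0 < ∑ i, s i := Finset.sum_pos (fun i _ => hs i) hne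
  set S := ∑ i, s i with hSdef
  have key : ∀ i : Fin n, q i * (Real.log (s i) - Real.log (q i)) ≤
      s i / S - q i + q i * Real.log S := by
    intro i
    have h1 : Real.log (s i) - Real.log (q i)
        = Real.log (s i / (q i * S)) + Real.log S := by
      rw [Real.log_div (hs i).ne' (mul_pos (hq i) hS).ne', Real.log_mul (hq i).ne' hS.ne']
      ring
    have h2 : Real.log (s i / (q i * S)) ≤ s i / (q i * S) - 1 :=
      Real.log_le_sub_one_of_pos (div_pos (hs i) (mul_pos (hq i) hS))
    have h3 : q i * Real.log (s i / (q i * S)) ≤ q i * (s i / (q i * S) - 1) :=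
      mul_le_mul_of_nonneg_left h2 (hq i).le
    have h4 : q i * (s i / (q i * S)) = s i / S := by
      rw [mul_div_assoc', div_eq_div_iff (mul_pos (hq i) hS).ne' hS.ne']
      ring
    calc q i * (Real.log (s i) - Real.log (q i))
        = q i * Real.log (s i / (q i * S)) + q i * Real.log S := by rw [h1]; ring
      _ ≤ q i * (s i / (q i * S) - 1) + q i * Real.log S := by linarith
      _ = s i / S - q i + q i * Real.log S := by rw [mul_sub, h4]; ring
  calc ∑ i, q i * (Real.log (s i) - Real.log (q i))
      ≤ ∑ i, (s i / S - q i + q i * Real.log S) := Finset.sum_le_sum (fun i _ => key i)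
    _ = Real.log S := by
        rw [Finset.sum_add_distrib, Finset.sum_sub_distrib, ← Finset.sum_div,
          ← Finset.sum_mul, hq1, ← hSdef]
        field_simp
        ring

/-- Gibbs' inequality: weighted log-likelihood of a probability vector is maximized
at the normalized weights. -/
lemma gibbs_ineq {n : ℕ} (c q : Fin n → ℝ) (hc : ∀ i, 0 < c i) (hq : ∀ i, 0 < q i)
    (hq1 : ∑ i, q i = 1) :
    ∑ i, c i * Real.log (q i) ≤ ∑ i, c i * Real.log (c i / ∑ j, c j) := by
  have hn : n ≠ 0 := by rintro rfl; simp at hq1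
  have hne : (Finset.univ : Finset (Fin n)).Nonempty := by
    rw [Finset.univ_nonempty_iff]
    exact Fin.pos_iff_nonempty.mp (Nat.pos_of_ne_zero hn)
  have hC : 0 < ∑ j, c j := Finset.sum_pos (fun i _ => hc i) hne
  set C := ∑ j, c j with hCdef
  have key : ∀ i : Fin n, c i * Real.log (q i) ≤
      c i * Real.log (c i / C) + (q i * C - c i) := by
    intro i
    have h2 : Real.log (q i * C / c i) ≤ q i * C / c i - 1 :=
      Real.log_le_sub_one_of_pos (div_pos (mul_pos (hq i) hC) (hc i))
    have e : Real.log (q i * C / c i) = Real.log (q i) - Real.log (c i / C) := by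
      rw [Real.log_div (mul_pos (hq i) hC).ne' (hc i).ne', Real.log_mul (hq i).ne' hC.ne',
        Real.log_div (hc i).ne' hC.ne']
      ring
    have h3 : c i * Real.log (q i * C / c i) ≤ c i * (q i * C / c i - 1) :=
      mul_le_mul_of_nonneg_left h2 (hc i).le
    have h4 : c i * (q i * C / c i) = q i * C := by
      rw [mul_div_assoc', mul_comm, mul_div_assoc, div_self (hc i).ne', mul_one]
    rw [e, mul_sub] at h3
    rw [mul_sub] at h3
    linarith [h3, h4.le, h4.ge]
  calc ∑ i, c i * Real.log (q i)
      ≤ ∑ i, (c i * Real.log (c i / C) + (q i * C - c i)) :=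
        Finset.sum_le_sum (fun i _ => key i)
    _ = ∑ i, c i * Real.log (c i / C) := by
        rw [Finset.sum_add_distrib, Finset.sum_sub_distrib, ← Finset.sum_mul, hq1, ← hCdef]
        ring

/-- Two-point Jensen inequality for `Real.log`. -/
lemma jensen2 {t a b : ℝ} (ht0 : 0 < t) (ht1 : t < 1) (ha : 0 < a) (hb : 0 < b) :
    t * Real.log a + (1 - t) * Real.log b ≤ Real.log (t * a + (1 - t) * b) := by
  have hS : 0 < t * a + (1 - t) * b := by nlinarith
  set S := t * a + (1 - t) * b with hSdef
  have h1 : Real.log a ≤ Real.log S + (a / S - 1) := by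
    have h := Real.log_le_sub_one_of_pos (show 0 < a / S from div_pos ha hS)
    rw [Real.log_div ha.ne' hS.ne'] at h
    linarith
  have h2 : Real.log b ≤ Real.log S + (b / S - 1) := by
    have h := Real.log_le_sub_one_of_pos (show 0 < b / S from div_pos hb hS)
    rw [Real.log_div hb.ne' hS.ne'] at h
    linarith
  have h3 : t * (a / S) + (1 - t) * (b / S) = 1 := by
    rw [mul_div_assoc', mul_div_assoc', ← add_div, hSdef]
    exact div_self hS.ne'
  have h4 := mul_le_mul_of_nonneg_left h1 ht0.le
  have h5 := mul_le_mul_of_nonneg_left h2 (by linarith : (0:ℝ) ≤ 1 - t)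
  nlinarith [h4, h5]

/-- The Bernoulli weight update maximizes `a log w + b log (1 - w)`. -/
lemma w_opt {a b w : ℝ} (ha : 0 < a) (hb : 0 ≤ b) (hw0 : 0 < w) (hw1 : w < 1) :
    a * Real.log w + b * Real.log (1 - w) ≤
      a * Real.log (a / (a + b)) + b * Real.log (1 - a / (a + b)) := by
  rcases eq_or_lt_of_le hb with hb0 | hbpos
  · have hb' : b = 0 := hb0.symm
    subst hb'
    simp only [zero_mul, add_zero, div_self ha.ne', Real.log_one, mul_zero]
    have : Real.log w ≤ 0 := Real.log_nonpos hw0.le hw1.le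
    nlinarith
  · have hT : 0 < a + b := by linarith
    have h1a : 1 - a / (a + b) = b / (a + b) := by
      field_simp
      ring
    rw [h1a]
    have k1 : a * Real.log w ≤ a * Real.log (a / (a + b)) + (w * (a + b) - a) := by
      have hlog : Real.log (w * (a + b) / a) ≤ w * (a + b) / a - 1 :=
        Real.log_le_sub_one_of_pos (div_pos (mul_pos hw0 hT) ha)
      have e : Real.log (w * (a + b) / a) = Real.log w - Real.log (a / (a + b)) := by
        rw [Real.log_div (mul_pos hw0 hT).ne' ha.ne', Real.log_mul hw0.ne' hT.ne',
          Real.log_div ha.ne' hT.ne']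
        ring
      have e2 : a * (w * (a + b) / a) = w * (a + b) := by
        rw [mul_div_assoc', mul_comm, mul_div_assoc, div_self ha.ne', mul_one]
      have h3 := mul_le_mul_of_nonneg_left hlog ha.le
      rw [e, mul_sub, mul_sub] at h3
      linarith [e2.le, e2.ge]
    have k2 : b * Real.log (1 - w) ≤ b * Real.log (b / (a + b)) + ((1 - w) * (a + b) - b) := by
      have hw1' : (0:ℝ) < 1 - w := by linarith
      have hlog : Real.log ((1 - w) * (a + b) / b) ≤ (1 - w) * (a + b) / b - 1 :=
        Real.log_le_sub_one_of_pos (div_pos (mul_pos hw1' hT) hbpos)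
      have e : Real.log ((1 - w) * (a + b) / b) =
          Real.log (1 - w) - Real.log (b / (a + b)) := by
        rw [Real.log_div (mul_pos hw1' hT).ne' hbpos.ne', Real.log_mul hw1'.ne' hT.ne',
          Real.log_div hbpos.ne' hT.ne']
        ring
      have e2 : b * ((1 - w) * (a + b) / b) = (1 - w) * (a + b) := by
        rw [mul_div_assoc', mul_comm, mul_div_assoc, div_self hbpos.ne', mul_one]
      have h3 := mul_le_mul_of_nonneg_left hlog hbpos.le
      rw [e, mul_sub, mul_sub] at h3
      linarith [e2.le, e2.ge]
    nlinarith [k1, k2]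

/-- One-inflated mixture term: lower bound for the log-likelihood increment
at a point with `y = 1`. -/
lemma mix_log {w w' f1 f1' t : ℝ} (hw0 : 0 < w) (hw1 : w < 1) (hw'0 : 0 < w')
    (hw'1 : w' < 1) (hf : 0 < f1) (hf' : 0 < f1')
    (ht : t = w * f1 / (1 - w + w * f1)) :
    Real.log (w * f1 + (1 - w)) +
      (t * ((Real.log w' + Real.log f1') - (Real.log w + Real.log f1)) +
        (1 - t) * (Real.log (1 - w') - Real.log (1 - w)))
      ≤ Real.log (w' * f1' + (1 - w')) := by
  have hden : (0:ℝ) < 1 - w + w * f1 := by nlinarith [mul_pos hw0 hf]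
  have hden' : (0:ℝ) < w' * f1' + (1 - w') := by nlinarith [mul_pos hw'0 hf']
  have ht0 : 0 < t := by rw [ht]; exact div_pos (mul_pos hw0 hf) hden
  have ht1 : t < 1 := by
    rw [ht, div_lt_one hden]
    linarith
  have hA : (0:ℝ) < w' * f1' / (w * f1) := div_pos (mul_pos hw'0 hf') (mul_pos hw0 hf)
  have hB : (0:ℝ) < (1 - w') / (1 - w) := div_pos (by linarith) (by linarith)
  have hmix : t * (w' * f1' / (w * f1)) + (1 - t) * ((1 - w') / (1 - w))
      = (w' * f1' + (1 - w')) / (w * f1 + (1 - w)) := by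
    have d3 : (1:ℝ) - w ≠ 0 := by linarith [hw1]
    have d4 : w * f1 + (1 - w) ≠ 0 := by nlinarith [mul_pos hw0 hf]
    rw [eq_div_iff d4, ht]
    field_simp
    ring
  have hJ := jensen2 ht0 ht1 hA hB
  rw [hmix, Real.log_div hden'.ne' (by nlinarith [mul_pos hw0 hf] : (w * f1 + (1 - w)) ≠ 0),
    Real.log_div (mul_pos hw'0 hf').ne' (mul_pos hw0 hf).ne',
    Real.log_mul hw'0.ne' hf'.ne', Real.log_mul hw0.ne' hf.ne',
    Real.log_div (by linarith : (1:ℝ) - w' ≠ 0) (by linarith : (1:ℝ) - w ≠ 0)] at hJ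
  linarith

/-- Theorem 1(b): one EM iteration in which the population size `N` is also updated
does not decrease the log empirical likelihood
`L_N(β, w, p) = log C(N, n) + (N − n) log α(β, w, p)
  + Σᵢ log h(yᵢ, xᵢ; β, w) + Σᵢ log pᵢ`,
where `h(y, x; β, w) = w f(y, x; β) + (1 − w)·1{y = 1}` and
`α(β, w, p) = w Σᵢ f(0, xᵢ; β) pᵢ`. -/
theorem em_step_monotone_updated_N
    {𝒳 B : Type*} (n : ℕ) (x : Fin n → 𝒳) (y : Fin n → ℕ) (hy : ∀ i, 1 ≤ y i)
    (f : ℕ → 𝒳 → B → ℝ)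
    (hf_nonneg : ∀ (k : ℕ) (ξ : 𝒳) (b : B), 0 ≤ f k ξ b)
    (hf_pmf : ∀ (ξ : 𝒳) (b : B), ∑' k : ℕ, f k ξ b = 1)
    (N : ℕ) (hN : n ≤ N)
    (β : B) (w : ℝ) (hw : w ∈ Set.Ioo (0 : ℝ) 1)
    (p : Fin n → ℝ) (hp : ∀ i, 0 < p i) (hp1 : ∑ i, p i = 1)
    (hfy : ∀ (i : Fin n) (b : B), 0 < f (y i) (x i) b)
    (hf0 : ∀ (i : Fin n) (b : B), 0 < f 0 (x i) b)
    (hf1 : ∀ (i : Fin n) (b : B), 0 < f 1 (x i) b)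
    (α : ℝ) (hα : α = w * ∑ i, f 0 (x i) β * p i)
    (v : Fin n → ℝ)
    (hv : ∀ i, v i =
      if y i = 1 then w * f 1 (x i) β / (1 - w + w * f 1 (x i) β) else 1)
    (u : Fin n → ℝ)
    (hu : ∀ i, u i = ((N : ℝ) - n) * w * f 0 (x i) β * p i / α)
    (w' : ℝ) (hw' : w' = (∑ i, (v i + u i)) / (∑ i, (1 + u i)))
    (p' : Fin n → ℝ) (hp' : ∀ i, p' i = (u i + 1) / ∑ j, (u j + 1))
    (β' : B)
    (hβ' : ∀ b : B,
      (∑ i, (v i * Real.log (f (y i) (x i) b) + u i * Real.log (f 0 (x i) b))) ≤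
        ∑ i, (v i * Real.log (f (y i) (x i) β') + u i * Real.log (f 0 (x i) β')))
    (α' : ℝ) (hα' : α' = w' * ∑ i, f 0 (x i) β' * p' i)
    (N' : ℕ) (hN' : n ≤ N')
    (hN'max : ∀ M : ℕ, n ≤ M →
      Real.log (M.choose n : ℝ) + ((M : ℝ) - n) * Real.log α' ≤
        Real.log (N'.choose n : ℝ) + ((N' : ℝ) - n) * Real.log α') :
    Real.log (N.choose n : ℝ) + ((N : ℝ) - n) * Real.log α +
        (∑ i, Real.log (w * f (y i) (x i) β + (1 - w) * (if y i = 1 then 1 else 0))) +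
        (∑ i, Real.log (p i)) ≤
      Real.log (N'.choose n : ℝ) + ((N' : ℝ) - n) * Real.log α' +
        (∑ i, Real.log (w' * f (y i) (x i) β' + (1 - w') * (if y i = 1 then 1 else 0))) +
        (∑ i, Real.log (p' i)) := by
  obtain ⟨hw0, hw1⟩ := hw
  have hn : n ≠ 0 := by rintro rfl; simp at hp1
  have hne : (Finset.univ : Finset (Fin n)).Nonempty := by
    rw [Finset.univ_nonempty_iff]
    exact Fin.pos_iff_nonempty.mp (Nat.pos_of_ne_zero hn)
  have hNn : (0:ℝ) ≤ (N:ℝ) - n := by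
    have h := (Nat.cast_le (α := ℝ)).mpr hN
    linarith
  have hα0 : 0 < α := by
    rw [hα]
    exact mul_pos hw0 (Finset.sum_pos (fun i _ => mul_pos (hf0 i β) (hp i)) hne)
  have hu0 : ∀ i, 0 ≤ u i := fun i => by
    rw [hu i]
    exact div_nonneg
      (mul_nonneg (mul_nonneg (mul_nonneg hNn hw0.le) (hf0 i β).le) (hp i).le) hα0.le
  have hv0 : ∀ i, 0 < v i := fun i => by
    rw [hv i]
    split_ifs with h
    · have h1 : 0 < w * f 1 (x i) β := mul_pos hw0 (hf1 i β)
      exact div_pos h1 (by linarith)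
    · exact one_pos
  have hv1 : ∀ i, v i ≤ 1 := fun i => by
    rw [hv i]
    split_ifs with h
    · have h1 : 0 < w * f 1 (x i) β := mul_pos hw0 (hf1 i β)
      rw [div_le_one (by linarith)]
      linarith
    · exact le_refl 1
  have hvlt : ∀ i, y i = 1 → v i < 1 := fun i h => by
    rw [hv i, if_pos h]
    have h1 : 0 < w * f 1 (x i) β := mul_pos hw0 (hf1 i β)
    rw [div_lt_one (by linarith)]
    linarith
  -- the weight totals
  have ha : 0 < ∑ i, (v i + u i) :=
    Finset.sum_pos (fun i _ => by have := hv0 i; have := hu0 i; linarith) hne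
  have hb : 0 ≤ ∑ i, (1 - v i) :=
    Finset.sum_nonneg (fun i _ => by have := hv1 i; linarith)
  have hT : ∑ i, (1 + u i) = (∑ i, (v i + u i)) + (∑ i, (1 - v i)) := by
    rw [← Finset.sum_add_distrib]
    exact Finset.sum_congr rfl fun i _ => by ring
  have hw'eq : w' = (∑ i, (v i + u i)) / ((∑ i, (v i + u i)) + (∑ i, (1 - v i))) := by
    rw [hw', hT]
  have hw'0 : 0 < w' := by
    rw [hw'eq]
    exact div_pos ha (by linarith)
  have hw'le1 : w' ≤ 1 := by
    rw [hw'eq, div_le_one (by linarith)]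
    linarith
  -- properties of p'
  have hT' : ∑ j, (u j + 1) = (∑ i, (v i + u i)) + (∑ i, (1 - v i)) := by
    rw [← hT]
    exact Finset.sum_congr rfl fun i _ => by ring
  have hT'0 : 0 < ∑ j, (u j + 1) := by
    rw [hT']
    linarith
  have hp'0 : ∀ i, 0 < p' i := fun i => by
    rw [hp' i]
    exact div_pos (by have := hu0 i; linarith) hT'0
  have hp'1 : ∑ i, p' i = 1 := by
    rw [Finset.sum_congr rfl fun i _ => hp' i, ← Finset.sum_div]
    exact div_self hT'0.ne'
  have hα'0 : 0 < α' := by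
    rw [hα']
    exact mul_pos hw'0 (Finset.sum_pos (fun i _ => mul_pos (hf0 i β') (hp'0 i)) hne)
  -- Step A: Jensen for the uncaptured part
  have hnum : ∀ i, (0:ℝ) < w * f 0 (x i) β * p i := fun i =>
    mul_pos (mul_pos hw0 (hf0 i β)) (hp i)
  have hqpos : ∀ i, 0 < w * f 0 (x i) β * p i / α := fun i => div_pos (hnum i) hα0
  have hqsum : ∑ i, w * f 0 (x i) β * p i / α = 1 := by
    rw [← Finset.sum_div,
      show ∑ i, w * f 0 (x i) β * p i = α by
        rw [hα, Finset.mul_sum]; exact Finset.sum_congr rfl fun i _ => by ring]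
    exact div_self hα0.ne'
  have hspos : ∀ i, 0 < w' * f 0 (x i) β' * p' i := fun i =>
    mul_pos (mul_pos hw'0 (hf0 i β')) (hp'0 i)
  have hssum : ∑ i, w' * f 0 (x i) β' * p' i = α' := by
    rw [hα', Finset.mul_sum]
    exact Finset.sum_congr rfl fun i _ => by ring
  have hjen := jensen_log_sum (fun i => w * f 0 (x i) β * p i / α)
      (fun i => w' * f 0 (x i) β' * p' i) hqpos hspos hqsum
  rw [hssum] at hjen
  have husum : ∑ i, u i = (N:ℝ) - n := by
    rw [Finset.sum_congr rfl fun i _ =>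
        (show u i = ((N:ℝ) - n) * (w * f 0 (x i) β * p i / α) by rw [hu i]; ring),
      ← Finset.mul_sum, hqsum, mul_one]
  have DA : (∑ i, u i * ((Real.log w' + Real.log (f 0 (x i) β') + Real.log (p' i)) -
        (Real.log w + Real.log (f 0 (x i) β) + Real.log (p i)))) + ((N:ℝ) - n) * Real.log α
      ≤ ((N:ℝ) - n) * Real.log α' := by
    have hlog : ∀ i : Fin n,
        u i * ((Real.log w' + Real.log (f 0 (x i) β') + Real.log (p' i)) -
          (Real.log w + Real.log (f 0 (x i) β) + Real.log (p i))) + u i * Real.log α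
        = ((N:ℝ) - n) * ((w * f 0 (x i) β * p i / α) *
            (Real.log (w' * f 0 (x i) β' * p' i) - Real.log (w * f 0 (x i) β * p i / α))) := by
      intro i
      rw [Real.log_mul (mul_pos hw'0 (hf0 i β')).ne' (hp'0 i).ne',
        Real.log_mul hw'0.ne' (hf0 i β').ne',
        Real.log_div (hnum i).ne' hα0.ne',
        Real.log_mul (mul_pos hw0 (hf0 i β)).ne' (hp i).ne',
        Real.log_mul hw0.ne' (hf0 i β).ne', hu i]
      ring
    calc (∑ i, u i * ((Real.log w' + Real.log (f 0 (x i) β') + Real.log (p' i)) -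
          (Real.log w + Real.log (f 0 (x i) β) + Real.log (p i)))) + ((N:ℝ) - n) * Real.log α
        = ∑ i, (u i * ((Real.log w' + Real.log (f 0 (x i) β') + Real.log (p' i)) -
            (Real.log w + Real.log (f 0 (x i) β) + Real.log (p i))) + u i * Real.log α) := by
          rw [Finset.sum_add_distrib, ← Finset.sum_mul, husum]
      _ = ((N:ℝ) - n) * ∑ i, ((w * f 0 (x i) β * p i / α) *
            (Real.log (w' * f 0 (x i) β' * p' i) - Real.log (w * f 0 (x i) β * p i / α))) := by
          rw [Finset.mul_sum]
          exact Finset.sum_congr rfl fun i _ => hlog i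
      _ ≤ ((N:ℝ) - n) * Real.log α' := mul_le_mul_of_nonneg_left hjen hNn
  -- Step B: per-observation mixture bound
  have DB : ∀ i : Fin n,
      Real.log (w * f (y i) (x i) β + (1 - w) * (if y i = 1 then 1 else 0)) +
        (v i * ((Real.log w' + Real.log (f (y i) (x i) β')) -
            (Real.log w + Real.log (f (y i) (x i) β))) +
          (1 - v i) * (Real.log (1 - w') - Real.log (1 - w)))
      ≤ Real.log (w' * f (y i) (x i) β' + (1 - w') * (if y i = 1 then 1 else 0)) := by
    intro i
    by_cases h : y i = 1
    · have hbpos : 0 < ∑ j, (1 - v j) :=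
        Finset.sum_pos' (fun j _ => by have := hv1 j; linarith)
          ⟨i, Finset.mem_univ i, by have := hvlt i h; linarith⟩
      have hw'lt1 : w' < 1 := by
        rw [hw'eq, div_lt_one (by linarith)]
        linarith
      have hif : (if y i = 1 then (1:ℝ) else 0) = 1 := if_pos h
      rw [hif, mul_one, mul_one, h]
      exact mix_log hw0 hw1 hw'0 hw'lt1 (hf1 i β) (hf1 i β')
        (show v i = w * f 1 (x i) β / (1 - w + w * f 1 (x i) β) by rw [hv i, if_pos h])
    · simp only [if_neg h, mul_zero, add_zero]
      rw [hv i, if_neg h,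
        Real.log_mul hw0.ne' (hfy i β).ne', Real.log_mul hw'0.ne' (hfy i β').ne']
      ring_nf
      linarith
  have DBsum : (∑ i, Real.log (w * f (y i) (x i) β + (1 - w) * (if y i = 1 then 1 else 0))) +
      (∑ i, (v i * ((Real.log w' + Real.log (f (y i) (x i) β')) -
          (Real.log w + Real.log (f (y i) (x i) β))) +
        (1 - v i) * (Real.log (1 - w') - Real.log (1 - w))))
      ≤ ∑ i, Real.log (w' * f (y i) (x i) β' + (1 - w') * (if y i = 1 then 1 else 0)) := by
    rw [← Finset.sum_add_distrib]
    exact Finset.sum_le_sum fun i _ => DB i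
  -- M step for w
  have Mw : (∑ i, (v i + u i)) * Real.log w + (∑ i, (1 - v i)) * Real.log (1 - w) ≤
      (∑ i, (v i + u i)) * Real.log w' + (∑ i, (1 - v i)) * Real.log (1 - w') := by
    have hopt := w_opt ha hb hw0 hw1
    rw [hw'eq]
    exact hopt
  -- M step for p
  have Mp : (∑ i, (u i + 1) * Real.log (p i)) ≤ ∑ i, (u i + 1) * Real.log (p' i) := by
    have hg := gibbs_ineq (fun i => u i + 1) p
      (fun i => by have := hu0 i; show (0:ℝ) < u i + 1; linarith) hp hp1
    calc (∑ i, (u i + 1) * Real.log (p i))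
        ≤ ∑ i, (u i + 1) * Real.log ((u i + 1) / ∑ j, (u j + 1)) := hg
      _ = ∑ i, (u i + 1) * Real.log (p' i) :=
          Finset.sum_congr rfl fun i _ => by rw [hp' i]
  -- combine the M-steps through the per-observation algebraic identity
  have hkey : 0 ≤ (∑ i, u i * ((Real.log w' + Real.log (f 0 (x i) β') + Real.log (p' i)) -
        (Real.log w + Real.log (f 0 (x i) β) + Real.log (p i)))) +
      (∑ i, (v i * ((Real.log w' + Real.log (f (y i) (x i) β')) -
          (Real.log w + Real.log (f (y i) (x i) β))) +
        (1 - v i) * (Real.log (1 - w') - Real.log (1 - w)))) +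
      ((∑ i, Real.log (p' i)) - ∑ i, Real.log (p i)) := by
    have e1 : (∑ i, u i * ((Real.log w' + Real.log (f 0 (x i) β') + Real.log (p' i)) -
          (Real.log w + Real.log (f 0 (x i) β) + Real.log (p i)))) +
        (∑ i, (v i * ((Real.log w' + Real.log (f (y i) (x i) β')) -
            (Real.log w + Real.log (f (y i) (x i) β))) +
          (1 - v i) * (Real.log (1 - w') - Real.log (1 - w)))) +
        ((∑ i, Real.log (p' i)) - ∑ i, Real.log (p i))
        = ((∑ i, (v i * Real.log (f (y i) (x i) β') + u i * Real.log (f 0 (x i) β'))) -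
            (∑ i, (v i * Real.log (f (y i) (x i) β) + u i * Real.log (f 0 (x i) β)))) +
          (((∑ i, (v i + u i)) * Real.log w' + (∑ i, (1 - v i)) * Real.log (1 - w')) -
            ((∑ i, (v i + u i)) * Real.log w + (∑ i, (1 - v i)) * Real.log (1 - w))) +
          ((∑ i, (u i + 1) * Real.log (p' i)) - ∑ i, (u i + 1) * Real.log (p i)) := by
      simp only [Finset.sum_mul, ← Finset.sum_add_distrib, ← Finset.sum_sub_distrib]
      exact Finset.sum_congr rfl fun i _ => by ring
    linarith [hβ' β, Mw, Mp, e1.le, e1.ge]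
  have step1 := hN'max N hN
  linarith [DA, DBsum, hkey, step1]
end

section
/- Let n ≥ 1, let g₁, …, gₙ and α be real numbers, and suppose ξ ∈ ℝ satisfies 1 + ξ(g_i − α) > 0 for all i and Σ_{i=1}^n (g_i − α)/(1 + ξ(g_i − α)) = 0. Define p*_i = n⁻¹ (1 + ξ(g_i − α))⁻¹. Then p*_i > 0 for all i, Σ_i p*_i = 1, Σ_i (g_i − α) p*_i = 0, and for every p = (p₁, …, pₙ) with p_i > 0, Σ_i p_i = 1 and Σ_i (g_i − α) p_i = 0, one has Σ_i log p_i ≤ Σ_i log p*_i. -/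
open scoped BigOperators

/-- The empirical-likelihood profiling step: the weights
`p*ᵢ = n⁻¹ (1 + ξ(gᵢ − α))⁻¹`, with `ξ` the Lagrange multiplier, form a probability
vector satisfying the structural constraint, and they maximize `Σᵢ log pᵢ` among all
probability vectors satisfying the constraint. -/
theorem el_profiling_step (n : ℕ) (hn : 1 ≤ n) (g : Fin n → ℝ) (α ξ : ℝ)
    (hpos : ∀ i, 0 < 1 + ξ * (g i - α))
    (hξ : ∑ i, (g i - α) / (1 + ξ * (g i - α)) = 0)
    (pstar : Fin n → ℝ)
    (hpstar : ∀ i, pstar i = (n : ℝ)⁻¹ * (1 + ξ * (g i - α))⁻¹) :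
    (∀ i, 0 < pstar i) ∧ (∑ i, pstar i = 1) ∧
      (∑ i, (g i - α) * pstar i = 0) ∧
      ∀ p : Fin n → ℝ, (∀ i, 0 < p i) → (∑ i, p i = 1) →
        (∑ i, (g i - α) * p i = 0) →
        (∑ i, Real.log (p i)) ≤ ∑ i, Real.log (pstar i) := by
  have hn' : (0:ℝ) < n := by exact_mod_cast hn
  have hps : ∀ i, 0 < pstar i := by
    intro i; rw [hpstar i]
    exact mul_pos (inv_pos.mpr hn') (inv_pos.mpr (hpos i))
  have hsum1 : ∑ i, pstar i = 1 := by
    have he : ∀ i, pstar i = (n:ℝ)⁻¹ * (1 - ξ * ((g i - α)/(1+ξ*(g i - α)))) := by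
      intro i; rw [hpstar i]
      have h := (hpos i).ne'
      field_simp
      ring
    rw [Finset.sum_congr rfl fun i _ => he i, ← Finset.mul_sum,
      Finset.sum_sub_distrib, ← Finset.mul_sum, hξ]
    simp [hn'.ne']
  have hsum2 : ∑ i, (g i - α) * pstar i = 0 := by
    have he : ∀ i, (g i - α) * pstar i = (n:ℝ)⁻¹ * ((g i - α)/(1+ξ*(g i - α))) := by
      intro i; rw [hpstar i]; field_simp
    rw [Finset.sum_congr rfl fun i _ => he i, ← Finset.mul_sum, hξ, mul_zero]
  refine ⟨hps, hsum1, hsum2, ?_⟩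
  intro p hp hp1 hp0
  have hineq : ∀ i, Real.log (p i) - Real.log (pstar i) ≤ p i / pstar i - 1 := by
    intro i
    have h := Real.log_le_sub_one_of_pos (div_pos (hp i) (hps i))
    rwa [Real.log_div (hp i).ne' (hps i).ne'] at h
  have hratio : ∑ i, (p i / pstar i - 1)
      = (n:ℝ) * ((∑ i, p i) + ξ * ∑ i, (g i - α) * p i) - n := by
    have he : ∀ i, p i / pstar i - 1 = (n:ℝ) * (p i + ξ * ((g i - α) * p i)) - 1 := by
      intro i; rw [hpstar i]
      have h := (hpos i).ne'
      field_simp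
    rw [Finset.sum_congr rfl fun i _ => he i, Finset.sum_sub_distrib]
    simp [Finset.mul_sum, Finset.sum_add_distrib, mul_add]
  have hz : ∑ i, (p i / pstar i - 1) = 0 := by
    rw [hratio, hp1, hp0]; ring
  have : ∑ i, (Real.log (p i) - Real.log (pstar i)) ≤ ∑ i, (p i / pstar i - 1) :=
    Finset.sum_le_sum (fun i _ => hineq i)
  rw [Finset.sum_sub_distrib, hz] at this
  linarith
end

section
/- Fix data x₁, …, xₙ ∈ 𝒳 and counts y₁, …, yₙ with y_i ≥ 1. Let N ≥ n be an integer, β ∈ B, w ∈ (0, 1], and p = (p₁, …, pₙ) with p_i > 0 and Σ_i p_i = 1. Assume 0 < f(0, x_i; β) < 1 and h(y_i, x_i; β, w) > 0 for all i, and set α = w Σ_i f(0, x_i; β) p_i. Then log C(N, n) + (N − n) log α + Σ_{i=1}^n log h(y_i, x_i; β, w) + Σ_{i=1}^n log p_i ≤ −n log n; in particular the log empirical likelihood is bounded above by 0. -/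
open scoped BigOperators

/-- The log empirical likelihood (5) of the paper is bounded above by `−n log n`,
and in particular by `0`. Here `h(y, x; β, w) = w f(y, x; β) + (1 − w)·1{y = 1}` and
`α = w Σᵢ f(0, xᵢ; β) pᵢ`. -/
theorem log_EL_upper_bound
    {𝒳 B : Type*} (n : ℕ) (x : Fin n → 𝒳) (y : Fin n → ℕ) (hy : ∀ i, 1 ≤ y i)
    (f : ℕ → 𝒳 → B → ℝ)
    (hf_nonneg : ∀ (k : ℕ) (ξ : 𝒳) (b : B), 0 ≤ f k ξ b)
    (hf_pmf : ∀ (ξ : 𝒳) (b : B), ∑' k : ℕ, f k ξ b = 1)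
    (N : ℕ) (hN : n ≤ N)
    (β : B) (w : ℝ) (hw : w ∈ Set.Ioc (0 : ℝ) 1)
    (p : Fin n → ℝ) (hp : ∀ i, 0 < p i) (hp1 : ∑ i, p i = 1)
    (hf0 : ∀ i : Fin n, f 0 (x i) β ∈ Set.Ioo (0 : ℝ) 1)
    (hh : ∀ i : Fin n,
      0 < w * f (y i) (x i) β + (1 - w) * (if y i = 1 then 1 else 0))
    (α : ℝ) (hα : α = w * ∑ i, f 0 (x i) β * p i) :
    Real.log (N.choose n : ℝ) + ((N : ℝ) - n) * Real.log α +
        (∑ i, Real.log (w * f (y i) (x i) β + (1 - w) * (if y i = 1 then 1 else 0))) +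
        (∑ i, Real.log (p i)) ≤ -(n : ℝ) * Real.log n ∧
      Real.log (N.choose n : ℝ) + ((N : ℝ) - n) * Real.log α +
        (∑ i, Real.log (w * f (y i) (x i) β + (1 - w) * (if y i = 1 then 1 else 0))) +
        (∑ i, Real.log (p i)) ≤ 0 := by
  obtain ⟨hw0, hw1⟩ := hw
  rcases Nat.eq_zero_or_pos n with hn | hn
  · subst hn
    simp [hα]
  -- main case : 1 ≤ n
  haveI : Nonempty (Fin n) := ⟨⟨0, hn⟩⟩
  have hn' : (0 : ℝ) < n := by exact_mod_cast hn
  have hsummable : ∀ i : Fin n, Summable (fun k => f k (x i) β) := by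
    intro i
    by_contra hs
    have := hf_pmf (x i) β
    rw [tsum_eq_zero_of_not_summable hs] at this
    norm_num at this
  have hfy : ∀ i : Fin n, f (y i) (x i) β ≤ 1 - f 0 (x i) β := by
    intro i
    have hne : (0 : ℕ) ≠ y i := by have := hy i; omega
    have hsum : ∑ k ∈ ({0, y i} : Finset ℕ), f k (x i) β ≤ 1 := by
      have := Summable.sum_le_tsum ({0, y i} : Finset ℕ)
        (fun k _ => hf_nonneg k (x i) β) (hsummable i)
      rwa [hf_pmf] at this
    rw [Finset.sum_pair hne] at hsum
    linarith
  -- abbreviations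
  set h : Fin n → ℝ :=
    fun i => w * f (y i) (x i) β + (1 - w) * (if y i = 1 then 1 else 0) with hdef
  set a : Fin n → ℝ := fun i => (1 - w * f 0 (x i) β) * p i with adef
  have hwf0 : ∀ i, w * f 0 (x i) β < 1 := by
    intro i
    nlinarith [(hf0 i).1, (hf0 i).2]
  have ha_pos : ∀ i, 0 < a i := fun i => mul_pos (by linarith [hwf0 i]) (hp i)
  have hh_le : ∀ i, h i ≤ 1 - w * f 0 (x i) β := by
    intro i
    have h1 : w * f (y i) (x i) β ≤ w * (1 - f 0 (x i) β) :=
      mul_le_mul_of_nonneg_left (hfy i) hw0.le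
    have h2 : (1 - w) * (if y i = 1 then 1 else 0) ≤ (1 - w) * 1 := by
      apply mul_le_mul_of_nonneg_left _ (by linarith)
      split <;> norm_num
    simp only [hdef]
    nlinarith
  have hα_pos : 0 < α := by
    rw [hα]
    exact mul_pos hw0 (Finset.sum_pos (fun i _ => mul_pos (hf0 i).1 (hp i))
      Finset.univ_nonempty)
  have hα_lt : α < 1 := by
    rw [hα, Finset.mul_sum]
    calc ∑ i, w * (f 0 (x i) β * p i) < ∑ i, p i := by
          apply Finset.sum_lt_sum_of_nonempty Finset.univ_nonempty
          intro i _
          nlinarith [hwf0 i, hp i]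
      _ = 1 := hp1
  have hsum_a : ∑ i, a i = 1 - α := by
    simp only [adef, sub_mul, one_mul, mul_assoc]
    rw [Finset.sum_sub_distrib, hp1, hα, Finset.mul_sum]
  -- step 1 : combine the h and p logs and bound by log a
  have key1 : (∑ i, Real.log (h i)) + (∑ i, Real.log (p i)) ≤ ∑ i, Real.log (a i) := by
    rw [← Finset.sum_add_distrib]
    apply Finset.sum_le_sum
    intro i _
    rw [← Real.log_mul (hh i).ne' (hp i).ne']
    apply Real.log_le_log (mul_pos (hh i) (hp i))
    exact mul_le_mul_of_nonneg_right (hh_le i) (hp i).le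
  -- step 2 : AM-GM via the tangent-line bound
  have hc : (0 : ℝ) < (1 - α) / n := div_pos (by linarith) hn'
  have key2 : ∑ i, Real.log (a i) ≤ (n : ℝ) * Real.log ((1 - α) / n) := by
    have hterm : ∀ i : Fin n,
        Real.log (a i) ≤ Real.log ((1 - α) / n) + (a i / ((1 - α) / n) - 1) := by
      intro i
      have h1 := Real.log_le_sub_one_of_pos (div_pos (ha_pos i) hc)
      rw [Real.log_div (ha_pos i).ne' hc.ne'] at h1
      linarith
    calc ∑ i, Real.log (a i)
        ≤ ∑ i, (Real.log ((1 - α) / n) + (a i / ((1 - α) / n) - 1)) :=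
          Finset.sum_le_sum fun i _ => hterm i
      _ = (n : ℝ) * Real.log ((1 - α) / n) + ((∑ i, a i) / ((1 - α) / n) - n) := by
          rw [Finset.sum_add_distrib, Finset.sum_sub_distrib, ← Finset.sum_div]
          simp [mul_comm]
      _ = (n : ℝ) * Real.log ((1 - α) / n) := by
          rw [hsum_a]
          have h9 : (1 - α) / ((1 - α) / n) = (n : ℝ) := by
            rw [div_div_eq_mul_div, mul_comm, mul_div_assoc,
              div_self (by linarith : (1 : ℝ) - α ≠ 0), mul_one]
          rw [h9]; ring
  -- step 3 : binomial term bounded by 1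
  have key3 : Real.log (N.choose n : ℝ) + ((N : ℝ) - n) * Real.log α
      + (n : ℝ) * Real.log (1 - α) ≤ 0 := by
    have hbin : (1 - α) ^ n * α ^ (N - n) * (N.choose n : ℝ) ≤ 1 := by
      have hexp := add_pow (1 - α) α N
      rw [sub_add_cancel, one_pow] at hexp
      have hle := Finset.single_le_sum
        (f := fun k => (1 - α) ^ k * α ^ (N - k) * (N.choose k : ℝ))
        (fun k _ => mul_nonneg (mul_nonneg (pow_nonneg (by linarith) _)
          (pow_nonneg hα_pos.le _)) (Nat.cast_nonneg _))
        (show n ∈ Finset.range (N + 1) from Finset.mem_range.2 (by omega))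
      rw [← hexp] at hle
      exact hle
    have hcast : ((N : ℝ) - n) = ((N - n : ℕ) : ℝ) := by
      rw [Nat.cast_sub hN]
    have hC : (0 : ℝ) < (N.choose n : ℝ) := by
      exact_mod_cast Nat.choose_pos hN
    have h1α : (0 : ℝ) < 1 - α := by linarith
    rw [hcast, ← Real.log_pow, ← Real.log_pow,
      ← Real.log_mul hC.ne' (pow_pos hα_pos _).ne',
      ← Real.log_mul (mul_pos hC (pow_pos hα_pos _)).ne' (pow_pos h1α _).ne']
    apply Real.log_nonpos
      (mul_pos (mul_pos hC (pow_pos hα_pos _)) (pow_pos h1α _)).le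
    nlinarith [hbin]
  -- assemble
  have hmain : Real.log (N.choose n : ℝ) + ((N : ℝ) - n) * Real.log α +
      (∑ i, Real.log (h i)) + (∑ i, Real.log (p i)) ≤ -(n : ℝ) * Real.log n := by
    have hlogdiv : Real.log ((1 - α) / n) = Real.log (1 - α) - Real.log n :=
      Real.log_div (by linarith) hn'.ne'
    have := key1.trans key2
    rw [hlogdiv] at this
    nlinarith [key3]
  refine ⟨hmain, hmain.trans ?_⟩
  have hlogn : (0 : ℝ) ≤ Real.log n :=
    Real.log_nonneg (by exact_mod_cast hn)
  nlinarith
end
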